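/- Let G be a d-regular graph whose simple random walk is transient (so f_{oo}(1/d) < ∞), and set σ* = d/f_{oo}(1/d). Then for 0 ≤ σ < σ*, the Uniform Random Walk on G + σV_{{o}} exists and its transition probabilities are u^σ_{xy} = (H_{xy}/d) · (1 − (σ/d)f_{oo}(1/d) + (σ/d)f_{oy}(1/d)) / (1 − (σ/d)f_{oo}(1/d) + (σ/d)f_{ox}(1/d)), where f_{xy}(t) = ((1−tA)^{-1})_{xy}. -/

import Mathlib

open Filter Topology Classical

open Classical in
noncomputable def matPow {V : Type*} (M : V → V → ℝ) : ℕ → V → V → ℝ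
  | 0 => fun x y => if x = y then 1 else 0
  | n+1 => fun x y => ∑' z, M x z * matPow M n z y

noncomputable def walkTotal {V : Type*} (M : V → V → ℝ) (n : ℕ) (x : V) : ℝ :=
  ∑' y, matPow M n x y

/-- `f_{xy}(t) = ∑_n (M^n)_{xy} t^n`. -/
noncomputable def genFun {V : Type*} (M : V → V → ℝ) (t : ℝ) (x y : V) : ℝ :=
  ∑' n : ℕ, matPow M n x y * t^n


section URWaux

open Function

variable {V : Type*}

lemma urw_summable_of_support_finite {f : V → ℝ} (hf : (support f).Finite) : Summable f :=
  summable_of_ne_finset_zero (s := hf.toFinset) fun b hb => by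
    by_contra h; exact hb (hf.mem_toFinset.2 h)

lemma urw_tsum_of_support_finite {f : V → ℝ} (hf : (support f).Finite) :
    ∑' x, f x = ∑ x ∈ hf.toFinset, f x :=
  tsum_eq_sum fun b hb => by by_contra h; exact hb (hf.mem_toFinset.2 h)

lemma urw_matPow_nonneg {M : V → V → ℝ} (hM : ∀ x y, 0 ≤ M x y) :
    ∀ (n : ℕ) (x y : V), 0 ≤ matPow M n x y
  | 0, x, y => by simp only [matPow]; split <;> norm_num
  | n+1, x, y => tsum_nonneg fun z => mul_nonneg (hM x z) (urw_matPow_nonneg hM n z y)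

lemma urw_matPow_support {M : V → V → ℝ} (hM : ∀ x, (support (M x)).Finite) :
    ∀ (n : ℕ) (x : V), (support (matPow M n x)).Finite
  | 0, x => (Set.finite_singleton x).subset (by
      intro y hy
      simp only [matPow, mem_support, ne_eq, ite_eq_right_iff, Classical.not_imp] at hy
      simp [hy.1.symm])
  | n+1, x => ((hM x).biUnion (fun z _ => urw_matPow_support hM n z)).subset (by
      intro y hy
      simp only [mem_support, ne_eq] at hy
      by_contra hmem
      apply hy
      have : ∀ z, M x z * matPow M n z y = 0 := by
        intro z
        by_cases hz : M x z = 0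
        · simp [hz]
        · have : y ∉ support (matPow M n z) := by
            intro hy2
            exact hmem (Set.mem_biUnion (by simpa [mem_support] using hz) hy2)
          simp only [mem_support, ne_eq, not_not] at this
          simp [this]
      simp only [matPow]
      simpa using tsum_congr (fun z => this z) |>.trans tsum_zero)

lemma urw_tsum_tsum_comm {α β : Type*} (f : α → β → ℝ) {s : Set α} (hs : s.Finite)
    {t : Set β} (ht : t.Finite) (hfs : ∀ a ∉ s, ∀ b, f a b = 0)
    (hft : ∀ a, ∀ b ∉ t, f a b = 0) :
    ∑' a, ∑' b, f a b = ∑' b, ∑' a, f a b := by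
  have h1 : ∀ a, ∑' b, f a b = ∑ b ∈ ht.toFinset, f a b := fun a =>
    tsum_eq_sum fun b hb => hft a b (by simpa using hb)
  have h2 : ∀ b, ∑' a, f a b = ∑ a ∈ hs.toFinset, f a b := fun b =>
    tsum_eq_sum fun a ha => hfs a (by simpa using ha) b
  calc ∑' a, ∑' b, f a b = ∑' a, ∑ b ∈ ht.toFinset, f a b := tsum_congr h1
    _ = ∑ a ∈ hs.toFinset, ∑ b ∈ ht.toFinset, f a b :=
        tsum_eq_sum fun a ha => Finset.sum_eq_zero fun b _ => hfs a (by simpa using ha) b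
    _ = ∑ b ∈ ht.toFinset, ∑ a ∈ hs.toFinset, f a b := Finset.sum_comm
    _ = ∑ b ∈ ht.toFinset, ∑' a, f a b := Finset.sum_congr rfl fun b _ => (h2 b).symm
    _ = ∑' b, ∑' a, f a b := (tsum_eq_sum (s := ht.toFinset) fun b hb =>
        (h2 b).trans (Finset.sum_eq_zero fun a _ => hft a b (by simpa using hb))).symm

/-- convolution limit via dominated convergence -/
lemma urw_conv_tendsto {g : ℕ → ℝ} (hg0 : ∀ m, 0 ≤ g m) (hg : Summable g)
    {b : ℕ → ℝ} {B : ℝ} (hb : ∀ n, |b n| ≤ B) {l : ℝ} (hbl : Tendsto b atTop (𝓝 l)) :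
    Tendsto (fun n => ∑ m ∈ Finset.range n, g m * b (n-1-m)) atTop
      (𝓝 ((∑' m, g m) * l)) := by
  have hB0 : 0 ≤ B := (abs_nonneg _).trans (hb 0)
  have h := tendsto_tsum_of_dominated_convergence (𝓕 := atTop)
      (f := fun (n m : ℕ) => if m < n then g m * b (n-1-m) else 0)
      (g := fun m => g m * l) (bound := fun m => g m * B) (hg.mul_right B)
      ?_ ?_
  · have heq : ∀ n : ℕ, ∑' m, (if m < n then g m * b (n-1-m) else 0)
        = ∑ m ∈ Finset.range n, g m * b (n-1-m) := by
      intro n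
      rw [tsum_eq_sum (s := Finset.range n) (fun m hm => if_neg (by simpa using hm))]
      exact Finset.sum_congr rfl fun m hm => if_pos (Finset.mem_range.1 hm)
    have htl : ∑' m, g m * l = (∑' m, g m) * l := tsum_mul_right
    rw [htl] at h
    exact h.congr heq
  · intro m
    have h1 : Tendsto (fun n : ℕ => n - 1 - m) atTop atTop := by
      have := tendsto_sub_atTop_nat (1 + m)
      simpa [Nat.sub_sub] using this
    have h2 : Tendsto (fun n : ℕ => g m * b (n-1-m)) atTop (𝓝 (g m * l)) :=
      tendsto_const_nhds.mul (hbl.comp h1)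
    apply h2.congr'
    filter_upwards [eventually_gt_atTop m] with n hn
    rw [if_pos hn]
  · filter_upwards with n
    intro k
    by_cases hk : k < n
    · rw [if_pos hk]
      rw [Real.norm_eq_abs, abs_mul, abs_of_nonneg (hg0 k)]
      exact mul_le_mul_of_nonneg_left (hb _) (hg0 k)
    · rw [if_neg hk]; simpa using mul_nonneg (hg0 k) hB0

end URWaux

section URWaux2
open Function
variable {V : Type*}

lemma urw_matPow_succ_right {M : V → V → ℝ} (hM : ∀ x, (support (M x)).Finite) :
    ∀ (n : ℕ) (x y : V), matPow M (n+1) x y = ∑' z, matPow M n x z * M z y := by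
  intro n
  induction n with
  | zero =>
    intro x y
    have h1 : matPow M 1 x y = M x y := by
      show ∑' z, M x z * matPow M 0 z y = M x y
      rw [tsum_eq_single y (fun z hz => by simp [matPow, hz])]
      simp [matPow]
    have h2 : ∑' z, matPow M 0 x z * M z y = M x y := by
      rw [tsum_eq_single x (fun z hz => by simp [matPow, Ne.symm hz])]
      simp [matPow]
    rw [h1, h2]
  | succ n ih =>
    intro x y
    have step1 : matPow M (n+2) x y = ∑' z, ∑' w, M x z * (matPow M n z w * M w y) := by
      show ∑' z, M x z * matPow M (n+1) z y = _
      refine tsum_congr fun z => ?_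
      rw [ih z y, ← tsum_mul_left]
    rw [step1]
    rw [urw_tsum_tsum_comm _ (hM x)
      (((hM x).biUnion (fun z _ => urw_matPow_support hM n z)))
      (fun z hz w => by simp only [mem_support, not_not] at hz; simp [hz])
      (fun z w hw => by
        by_cases hz : M x z = 0
        · simp [hz]
        · have : matPow M n z w = 0 := by
            by_contra h
            exact hw (Set.mem_biUnion (by simpa [mem_support] using hz)
              (by simpa [mem_support] using h))
          simp [this])]
    refine tsum_congr fun w => ?_
    have : ∑' z, M x z * (matPow M n z w * M w y)
        = ∑' z, (M x z * matPow M n z w) * M w y := tsum_congr fun z => by ring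
    rw [this, tsum_mul_right]
    show _ = (∑' z, M x z * matPow M n z w) * M w y
    rfl

lemma urw_matPow_symm {M : V → V → ℝ} (hM : ∀ x, (support (M x)).Finite)
    (hsymm : ∀ x y, M x y = M y x) : ∀ (n : ℕ) (x y : V), matPow M n x y = matPow M n y x := by
  intro n
  induction n with
  | zero => intro x y; simp only [matPow]; by_cases h : x = y <;> simp [h, Ne.symm, eq_comm]
  | succ n ih =>
    intro x y
    rw [urw_matPow_succ_right hM n y x]
    show ∑' z, M x z * matPow M n z y = _
    exact tsum_congr fun z => by rw [ih z y, hsymm x z]; ring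

lemma urw_walkTotal_rec {M : V → V → ℝ} (hM : ∀ x, (support (M x)).Finite) (n : ℕ) (x : V) :
    walkTotal M (n+1) x = ∑' z, M x z * walkTotal M n z := by
  show ∑' y, ∑' z, M x z * matPow M n z y = _
  have hswap := urw_tsum_tsum_comm (fun z y => M x z * matPow M n z y) (hM x)
      ((hM x).biUnion (fun z _ => urw_matPow_support hM n z))
      (fun z hz y => by simp only [mem_support, not_not] at hz; simp [hz])
      (fun z y hy => by
        by_cases hz : M x z = 0
        · simp [hz]
        · have : matPow M n z y = 0 := by
            by_contra h
            exact hy (Set.mem_biUnion (by simpa [mem_support] using hz)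
              (by simpa [mem_support] using h))
          simp [this])
  rw [← hswap]
  exact tsum_congr fun z => tsum_mul_left

end URWaux2

lemma urw_summable_mul_of_left {V : Type*} {f : V → ℝ} (hf : (Function.support f).Finite)
    (g : V → ℝ) : Summable fun z => f z * g z :=
  urw_summable_of_support_finite (hf.subset fun z hz => by
    simp only [Function.mem_support] at hz ⊢
    intro h; exact hz (by rw [h, zero_mul]))

lemma urw_renewal {a : ℕ → ℝ} (ha0 : ∀ m, 0 ≤ a m) (ha : Summable a)
    {c : ℝ} (hc : 0 ≤ c) (hcf : c * ∑' m, a m < 1)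
    {b : ℕ → ℝ} (hbrec : ∀ n, b n = 1 + c * ∑ m ∈ Finset.range n, a m * b (n-1-m)) :
    (∀ n, 1 ≤ b n) ∧ (∀ n, b n ≤ 1/(1 - c * ∑' m, a m)) ∧
      Tendsto b atTop (𝓝 (1/(1 - c * ∑' m, a m))) := by
  set f := ∑' m, a m with hfdef
  have hf0 : 0 ≤ f := tsum_nonneg ha0
  have h1cf : 0 < 1 - c * f := by linarith
  have hb1 : ∀ n, 1 ≤ b n := by
    intro n
    induction n using Nat.strong_induction_on with
    | _ n ih =>
      rw [hbrec n]
      have hs : 0 ≤ ∑ m ∈ Finset.range n, a m * b (n-1-m) :=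
        Finset.sum_nonneg fun m hm => mul_nonneg (ha0 m)
          (le_trans zero_le_one (ih (n-1-m) (by have := Finset.mem_range.1 hm; omega)))
      nlinarith
  set B := 1/(1 - c * f) with hBdef
  have hB0 : 0 < B := by positivity
  have hBfix : 1 + c * (f * B) = B := by
    rw [hBdef]; field_simp; ring
  have hbB : ∀ n, b n ≤ B := by
    intro n
    induction n using Nat.strong_induction_on with
    | _ n ih =>
      rw [hbrec n]
      have hsum : ∑ m ∈ Finset.range n, a m * b (n-1-m)
          ≤ (∑ m ∈ Finset.range n, a m) * B := by
        rw [Finset.sum_mul]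
        exact Finset.sum_le_sum fun m hm => mul_le_mul_of_nonneg_left
          (ih (n-1-m) (by have := Finset.mem_range.1 hm; omega)) (ha0 m)
      have hpart : ∑ m ∈ Finset.range n, a m ≤ f :=
        Summable.sum_le_tsum (Finset.range n) (fun m _ => ha0 m) ha
      have h2 : ∑ m ∈ Finset.range n, a m * b (n-1-m) ≤ f * B :=
        hsum.trans (mul_le_mul_of_nonneg_right hpart hB0.le)
      nlinarith
  have hmono : ∀ n, b n ≤ b (n+1) := by
    intro n
    induction n using Nat.strong_induction_on with
    | _ n ih =>
      rw [hbrec n, hbrec (n+1)]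
      have hre : ∑ m ∈ Finset.range (n+1), a m * b (n+1-1-m)
          = ∑ m ∈ Finset.range n, a m * b (n - m) + a n * b 0 := by
        simp only [Nat.add_sub_cancel]
        rw [Finset.sum_range_succ]
        simp
      rw [hre]
      have hterm : ∀ m ∈ Finset.range n, a m * b (n-1-m) ≤ a m * b (n-m) := by
        intro m hm
        have hmn := Finset.mem_range.1 hm
        have h' : n - m = (n-1-m) + 1 := by omega
        rw [h']
        exact mul_le_mul_of_nonneg_left (ih (n-1-m) (by omega)) (ha0 m)
      have h1 : ∑ m ∈ Finset.range n, a m * b (n-1-m)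
          ≤ ∑ m ∈ Finset.range n, a m * b (n-m) := Finset.sum_le_sum hterm
      have h2 : 0 ≤ a n * b 0 := mul_nonneg (ha0 n) (by linarith [hb1 0])
      have h3 : ∑ m ∈ Finset.range n, a m * b (n-1-m)
          ≤ ∑ m ∈ Finset.range n, a m * b (n-m) + a n * b 0 := by linarith
      nlinarith [mul_le_mul_of_nonneg_left h3 hc]
  have hbdd : BddAbove (Set.range b) := ⟨B, by rintro _ ⟨n, rfl⟩; exact hbB n⟩
  have hbl : Tendsto b atTop (𝓝 (⨆ n, b n)) :=
    tendsto_atTop_ciSup (monotone_nat_of_le_succ hmono) hbdd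
  set l := ⨆ n, b n with hl
  have habs : ∀ n, |b n| ≤ B := fun n => abs_le.2 ⟨by linarith [hb1 n], hbB n⟩
  have hconv := urw_conv_tendsto ha0 ha habs hbl
  have h2 : Tendsto (fun n => b (n+1)) atTop (𝓝 l) := hbl.comp (tendsto_add_atTop_nat 1)
  have h3 : Tendsto (fun n => 1 + c * ∑ m ∈ Finset.range (n+1), a m * b (n+1-1-m)) atTop
      (𝓝 (1 + c * (f * l))) := by
    have h := hconv.comp (tendsto_add_atTop_nat 1)
    exact tendsto_const_nhds.add ((h.const_mul c))
  have h4 : (fun n => b (n+1))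
      = fun n => 1 + c * ∑ m ∈ Finset.range (n+1), a m * b (n+1-1-m) :=
    funext fun n => hbrec (n+1)
  rw [h4] at h2
  have hlim_eq : l = 1 + c * (f * l) := tendsto_nhds_unique h2 h3
  have hlval : l = B := by
    rw [hBdef, eq_div_iff h1cf.ne']
    nlinarith [hlim_eq]
  refine ⟨hb1, hbB, ?_⟩
  show Tendsto b atTop (𝓝 B)
  rw [← hlval]
  exact hbl


/-- let `G` be a `d`-regular graph with transient simple random walk, so
`f_{oo}(1/d) < ∞`, and `σ* = d/f_{oo}(1/d)`. For `0 ≤ σ < σ*` the Uniform Random Walk on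
`G + σ V_{o}` exists, with transition probabilities
`u^σ_{xy} = (H_{xy}/d)·(1 − (σ/d)f_{oo}(1/d) + (σ/d)f_{oy}(1/d))/(1 − (σ/d)f_{oo}(1/d) + (σ/d)f_{ox}(1/d))`. -/
theorem urw_transient_phase
    {V : Type*} (A : V → V → ℝ) (d : ℝ) (hd : 0 < d)
    (hAsymm : ∀ x y, A x y = A y x)
    (hAnn : ∀ x y, 0 ≤ A x y)
    (hloc : ∀ x, (Function.support (A x)).Finite)
    (hreg : ∀ x, ∑' y, A x y = d)
    (hconn : ∀ x y : V, ∃ n : ℕ, 0 < matPow A n x y)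
    (o : V)
    (htrans : ∀ y, Summable (fun n : ℕ => matPow A n o y * (1/d)^n))
    (σ : ℝ) (hσ : 0 ≤ σ) (hσlt : σ < d / genFun A (1/d) o o)
    (H : V → V → ℝ)
    (hH : H = fun x y => A x y + if x = o ∧ y = o then σ else 0) :
    ∀ x y : V, 0 < H x y →
      Tendsto (fun n : ℕ => H x y * walkTotal H (n-1) y / walkTotal H n x) atTop
        (𝓝 ((H x y / d) *
          ((1 - (σ/d) * genFun A (1/d) o o + (σ/d) * genFun A (1/d) o y) /
           (1 - (σ/d) * genFun A (1/d) o o + (σ/d) * genFun A (1/d) o x)))) := by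
  intro x y hxy
  have hd0 : d ≠ 0 := ne_of_gt hd
  have hdp : ∀ k : ℕ, (0:ℝ) < d^k := fun k => pow_pos hd k
  have hHnn : ∀ p q, 0 ≤ H p q := by
    intro p q; rw [hH]
    have h2 : (0:ℝ) ≤ if p = o ∧ q = o then σ else 0 := by
      split_ifs
      · exact hσ
      · exact le_refl 0
    exact add_nonneg (hAnn p q) h2

  have hHloc : ∀ p, (Function.support (H p)).Finite := by
    intro p
    apply ((hloc p).union (Set.finite_singleton o)).subset
    intro q hq
    simp only [Function.mem_support] at hq
    by_contra hmem
    simp only [Set.mem_union, Set.mem_singleton_iff, Function.mem_support, not_or,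
      not_not] at hmem
    apply hq
    rw [hH]
    dsimp only
    rw [hmem.1, if_neg (fun h => hmem.2 h.2), add_zero]
  have hPHnn := urw_matPow_nonneg hHnn
  have hWnn : ∀ (n : ℕ) (p : V), 0 ≤ walkTotal H n p :=
    fun n p => tsum_nonneg fun q => hPHnn n p q
  have hW0 : ∀ p : V, walkTotal H 0 p = 1 := by
    intro p
    show ∑' q, matPow H 0 p q = 1
    rw [tsum_eq_single p (fun q hq => by
      simp only [matPow]; exact if_neg fun h => hq h.symm)]
    simp [matPow]
  -- renewal formula for walk totals
  have hWF : ∀ (n : ℕ) (p : V), walkTotal H n p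
      = d^n + σ * ∑ m ∈ Finset.range n, matPow A m p o * walkTotal H (n-1-m) o := by
    intro n
    induction n with
    | zero => intro p; simp [hW0 p]
    | succ n ih =>
      intro p
      rw [urw_walkTotal_rec hHloc n p]
      have hsplit : ∀ z, H p z * walkTotal H n z
          = A p z * walkTotal H n z
            + (if p = o ∧ z = o then σ else 0) * walkTotal H n z := by
        intro z; rw [hH]; ring
      rw [tsum_congr hsplit]
      have hsummA : Summable fun z => A p z * walkTotal H n z :=
        urw_summable_mul_of_left (hloc p) _
      have hsummI : Summable fun z => (if p = o ∧ z = o then σ else 0) * walkTotal H n z :=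
        urw_summable_of_support_finite ((Set.finite_singleton o).subset (fun z hz => by
          simp only [Function.mem_support] at hz
          by_contra h
          exact hz (by rw [if_neg (fun hc => h hc.2), zero_mul])))
      rw [Summable.tsum_add hsummA hsummI]
      have hsum2 : ∑' z, (if p = o ∧ z = o then σ else 0) * walkTotal H n z
          = (if p = o then σ else 0) * walkTotal H n o := by
        rw [tsum_eq_single o (fun z hz => by rw [if_neg (fun hc => hz hc.2), zero_mul])]
        by_cases hp : p = o <;> simp [hp]
      rw [hsum2]
      have hterm : ∀ z, A p z * walkTotal H n z
          = A p z * d^n + ∑ m ∈ Finset.range n,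
              σ * (A p z * (matPow A m z o * walkTotal H (n-1-m) o)) := by
        intro z
        rw [ih z, mul_add]
        congr 1
        simp only [Finset.mul_sum]
        exact Finset.sum_congr rfl fun m _ => by ring
      rw [tsum_congr hterm]
      have hsumm1 : Summable fun z => A p z * d^n := urw_summable_mul_of_left (hloc p) _
      have hsumm2 : Summable fun z => ∑ m ∈ Finset.range n,
          σ * (A p z * (matPow A m z o * walkTotal H (n-1-m) o)) :=
        summable_sum fun m _ => ((urw_summable_mul_of_left (hloc p) _).mul_left σ)
      rw [Summable.tsum_add hsumm1 hsumm2]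
      have e1 : ∑' z, A p z * d^n = d^(n+1) := by
        rw [tsum_mul_right, hreg p]; ring
      have e2 : ∑' z, ∑ m ∈ Finset.range n,
            σ * (A p z * (matPow A m z o * walkTotal H (n-1-m) o))
          = ∑ m ∈ Finset.range n, σ * (matPow A (m+1) p o * walkTotal H (n-1-m) o) := by
        rw [Summable.tsum_finsetSum (fun m _ => ((urw_summable_mul_of_left (hloc p) _).mul_left σ))]
        refine Finset.sum_congr rfl fun m _ => ?_
        rw [tsum_mul_left]
        congr 1
        have h' : ∑' z, A p z * (matPow A m z o * walkTotal H (n-1-m) o)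
            = ∑' z, (A p z * matPow A m z o) * walkTotal H (n-1-m) o :=
          tsum_congr fun z => by ring
        rw [h', tsum_mul_right]
        show _ = (∑' z, A p z * matPow A m z o) * walkTotal H (n-1-m) o
        rfl
      rw [e1, e2]
      simp only [Nat.add_sub_cancel]
      have hre : ∑ m ∈ Finset.range (n+1), matPow A m p o * walkTotal H (n - m) o
          = ∑ i ∈ Finset.range n, matPow A (i+1) p o * walkTotal H (n-1-i) o
            + (if p = o then 1 else 0) * walkTotal H n o := by
        rw [Finset.sum_range_succ']
        congr 1
        · refine Finset.sum_congr rfl fun i hi => ?_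
          have h' : n - (i+1) = n-1-i := by omega
          rw [h']
      rw [hre]
      have hite : (if p = o then σ else 0) * walkTotal H n o
          = σ * ((if p = o then 1 else 0) * walkTotal H n o) := by
        by_cases hp : p = o <;> simp [hp]
      rw [hite, mul_add, Finset.mul_sum]
      ring
  -- normalized recursion
  have hsym : ∀ (m : ℕ) (p : V), matPow A m p o = matPow A m o p :=
    fun m p => urw_matPow_symm hloc hAsymm m p o
  have hwf : ∀ (n : ℕ) (p : V), walkTotal H n p / d^n
      = 1 + (σ/d) * ∑ m ∈ Finset.range n,
          (matPow A m o p * (1/d)^m) * (walkTotal H (n-1-m) o / d^(n-1-m)) := by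
    intro n p
    rw [hWF n p, add_div, div_self (hdp n).ne']
    congr 1
    calc σ * (∑ m ∈ Finset.range n, matPow A m p o * walkTotal H (n-1-m) o) / d^n
        = ∑ m ∈ Finset.range n,
            σ * (matPow A m p o * walkTotal H (n-1-m) o) / d^n := by
          rw [Finset.mul_sum, Finset.sum_div]
      _ = ∑ m ∈ Finset.range n, (σ/d) *
            ((matPow A m o p * (1/d)^m) * (walkTotal H (n-1-m) o / d^(n-1-m))) := by
          refine Finset.sum_congr rfl fun m hm => ?_
          have hmn := Finset.mem_range.1 hm
          have h3 : m + (n - 1 - m) + 1 = n := by omega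
          have hdn : d^n = d^m * d^(n-1-m) * d := by
            conv_lhs => rw [← h3]
            rw [pow_add, pow_add, pow_one]
          rw [hdn, hsym m p]
          simp only [div_eq_mul_inv, mul_inv, one_div, inv_pow]
          ring
      _ = (σ/d) * ∑ m ∈ Finset.range n,
            (matPow A m o p * (1/d)^m) * (walkTotal H (n-1-m) o / d^(n-1-m)) :=
          (Finset.mul_sum _ _ _).symm
  set b : ℕ → ℝ := fun n => walkTotal H n o / d^n with hbdef
  have hbrec : ∀ n, b n = 1 + (σ/d) * ∑ m ∈ Finset.range n,
      (matPow A m o o * (1/d)^m) * b (n-1-m) := fun n => hwf n o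
  have ha0 : ∀ m, 0 ≤ matPow A m o o * (1/d)^m :=
    fun m => mul_nonneg (urw_matPow_nonneg hAnn m o o) (by positivity)
  have hc0 : 0 ≤ σ/d := div_nonneg hσ hd.le
  have hgen : genFun A (1/d) o o = ∑' m, matPow A m o o * (1/d)^m := rfl
  have hfo_ge1 : 1 ≤ ∑' m, matPow A m o o * (1/d)^m := by
    have h := Summable.le_tsum (htrans o) 0 (fun m _ => ha0 m)
    simpa [matPow] using h
  have hfo_pos : (0:ℝ) < ∑' m, matPow A m o o * (1/d)^m :=
    lt_of_lt_of_le one_pos hfo_ge1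
  have hcf : (σ/d) * ∑' m, matPow A m o o * (1/d)^m < 1 := by
    rw [div_mul_eq_mul_div, div_lt_one hd]
    rw [hgen] at hσlt
    exact (lt_div_iff₀ hfo_pos).1 hσlt
  obtain ⟨hb1, hbB, hbl⟩ := urw_renewal ha0 (htrans o) hc0 hcf hbrec
  have h1cf : 0 < 1 - (σ/d) * ∑' m, matPow A m o o * (1/d)^m := by linarith
  -- limit of normalized totals
  have hwlim : ∀ p : V, Tendsto (fun n => walkTotal H n p / d^n) atTop
      (𝓝 (1 + (σ/d) * ((∑' m, matPow A m o p * (1/d)^m)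
        * (1/(1 - (σ/d) * ∑' m, matPow A m o o * (1/d)^m))))) := by
    intro p
    have hg0 : ∀ m, 0 ≤ matPow A m o p * (1/d)^m :=
      fun m => mul_nonneg (urw_matPow_nonneg hAnn m o p) (by positivity)
    have hBpos : (0:ℝ) < 1/(1 - (σ/d) * ∑' m, matPow A m o o * (1/d)^m) := by positivity
    have habs : ∀ n, |b n| ≤ 1/(1 - (σ/d) * ∑' m, matPow A m o o * (1/d)^m) :=
      fun n => abs_le.2 ⟨by linarith [hb1 n], hbB n⟩
    have hconv := urw_conv_tendsto hg0 (htrans p) habs hbl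
    have hlim := (tendsto_const_nhds (x := (1:ℝ))).add (hconv.const_mul (σ/d))
    refine hlim.congr fun n => ?_
    exact (hwf n p).symm
  -- positivity of the limits
  have hLpos : ∀ p : V, 0 < 1 + (σ/d) * ((∑' m, matPow A m o p * (1/d)^m)
      * (1/(1 - (σ/d) * ∑' m, matPow A m o o * (1/d)^m))) := by
    intro p
    have hg : 0 ≤ ∑' m, matPow A m o p * (1/d)^m :=
      tsum_nonneg fun m => mul_nonneg (urw_matPow_nonneg hAnn m o p) (by positivity)
    have hB : (0:ℝ) ≤ 1/(1 - (σ/d) * ∑' m, matPow A m o o * (1/d)^m) := by positivity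
    nlinarith [mul_nonneg hc0 (mul_nonneg hg hB)]
  have hWpos : ∀ n, 0 < walkTotal H n x := by
    intro n
    rw [hWF n x]
    have h2 : 0 ≤ σ * ∑ m ∈ Finset.range n, matPow A m x o * walkTotal H (n-1-m) o :=
      mul_nonneg hσ (Finset.sum_nonneg fun m _ =>
        mul_nonneg (urw_matPow_nonneg hAnn m x o) (hWnn _ o))
    nlinarith [hdp n]
  -- eventual identity
  have heq : ∀ᶠ n in atTop, H x y * walkTotal H (n-1) y / walkTotal H n x
      = (H x y / d) * ((walkTotal H (n-1) y / d^(n-1)) / (walkTotal H n x / d^n)) := by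
    filter_upwards [eventually_ge_atTop 1] with n hn
    have h3 : (n - 1) + 1 = n := by omega
    have hdn : d^n = d^(n-1) * d := by
      conv_lhs => rw [← h3]
      rw [pow_succ]
    rw [hdn]
    have h1 : walkTotal H n x ≠ 0 := (hWpos n).ne'
    field_simp
  have hlim := (((hwlim y).comp (tendsto_sub_atTop_nat 1)).div (hwlim x) (hLpos x).ne')
  have hlim2 := hlim.const_mul (H x y / d)
  have key : ∀ F : ℝ, 1 + (σ/d) * (F * (1/(1 - (σ/d) * ∑' m, matPow A m o o * (1/d)^m)))
      = (1 - (σ/d) * (∑' m, matPow A m o o * (1/d)^m) + (σ/d) * F)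
        / (1 - (σ/d) * ∑' m, matPow A m o o * (1/d)^m) := by
    intro F
    set c := σ/d with hcdef
    set s := ∑' m, matPow A m o o * (1/d)^m with hsdef
    have h : 1 - c * s ≠ 0 := h1cf.ne'
    rw [eq_div_iff h]
    field_simp
  have hnumx : 0 < 1 - (σ/d) * (∑' m, matPow A m o o * (1/d)^m)
      + (σ/d) * ∑' m, matPow A m o x * (1/d)^m := by
    have h := hLpos x
    rw [key (∑' m, matPow A m o x * (1/d)^m)] at h
    have := mul_pos h h1cf
    rwa [div_mul_cancel₀ _ h1cf.ne'] at this
  have hval : (H x y / d) * ((1 + (σ/d) * ((∑' m, matPow A m o y * (1/d)^m)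
        * (1/(1 - (σ/d) * ∑' m, matPow A m o o * (1/d)^m))))
      / (1 + (σ/d) * ((∑' m, matPow A m o x * (1/d)^m)
        * (1/(1 - (σ/d) * ∑' m, matPow A m o o * (1/d)^m)))))
      = (H x y / d) *
        ((1 - (σ/d) * genFun A (1/d) o o + (σ/d) * genFun A (1/d) o y) /
         (1 - (σ/d) * genFun A (1/d) o o + (σ/d) * genFun A (1/d) o x)) := by
    have hgy : genFun A (1/d) o y = ∑' m, matPow A m o y * (1/d)^m := rfl
    have hgx : genFun A (1/d) o x = ∑' m, matPow A m o x * (1/d)^m := rfl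
    rw [hgen, hgy, hgx, key (∑' m, matPow A m o y * (1/d)^m),
      key (∑' m, matPow A m o x * (1/d)^m)]
    congr 1
    rw [div_div_div_cancel_right₀ h1cf.ne']
  rw [hval] at hlim2
  refine Tendsto.congr' ?_ hlim2
  filter_upwards [heq] with n hn using hn.symm
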